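/- Let R be a discrete valuation ring with maximal ideal m, and let u, v ∈ R[x] be polynomials with uv = a for some constant a ∈ R. If v ≡ x^r mod m·R[x] for some r > 0 (i.e., the reduction of v modulo m is x^r with r positive), then u = 0 and a = 0. -/

import Mathlib

/-- Let `R` be a discrete valuation ring and `u, v ∈ R[x]` with `u * v = C a` a
constant. If the reduction of `v` modulo the maximal ideal is `x^r` with `r > 0`,
then `u = 0` and `a = 0`. -/
theorem stmt_1 {R : Type*} [CommRing R] [IsDomain R] [IsDiscreteValuationRing R]
    (u v : Polynomial R) (a : R) (huv : u * v = Polynomial.C a)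
    (r : ℕ) (hr : 0 < r)
    (hv : v.map (IsLocalRing.residue R) = Polynomial.X ^ r) :
    u = 0 ∧ a = 0 := by
  have hvdeg : r ≤ v.natDegree := by
    have h1 := Polynomial.natDegree_map_le (f := IsLocalRing.residue R) (p := v)
    rw [hv, Polynomial.natDegree_X_pow] at h1
    exact h1
  have hv0 : v ≠ 0 := by
    intro h
    rw [h, Polynomial.map_zero] at hv
    exact (pow_ne_zero r Polynomial.X_ne_zero) hv.symm
  have hu : u = 0 := by
    by_contra hu0
    have hca : Polynomial.C a ≠ 0 := by
      rw [← huv]; exact mul_ne_zero hu0 hv0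
    have hdeg : u.natDegree + v.natDegree = 0 := by
      have := Polynomial.natDegree_mul hu0 hv0
      rw [huv, Polynomial.natDegree_C] at this
      omega
    omega
  refine ⟨hu, ?_⟩
  rw [hu, zero_mul] at huv
  exact (Polynomial.C_eq_zero.mp huv.symm)
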